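/- Let γ: [0,1] → S¹ be a continuous path in the unit circle (viewed as unit complex numbers) satisfying γ(1) = conj(γ(0)). Then γ is homotopic, through paths δ_t satisfying δ_t(1) = conj(δ_t(0)) for all t, to a constant path at 1 or at −1. -/

import Mathlib

open unitInterval

lemma aux_exists_lift (γ : C(unitInterval, ℂ)) (hγ : ∀ t, ‖γ t‖ = 1) :
    ∃ x : C(unitInterval, ℝ), ∀ s, Complex.exp ((x s : ℂ) * Complex.I) = γ s := by
  have hne : ∀ s, γ s ≠ 0 := fun s h => by simpa [h] using hγ s
  have hu := Metric.uniformContinuous_iff.mp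
    (CompactSpace.uniformContinuous_of_continuous γ.continuous)
  obtain ⟨δ, hδ0, hδ⟩ := hu 1 one_pos
  obtain ⟨N, hN⟩ := exists_nat_one_div_lt hδ0
  set n : ℕ := N + 1 with hn
  have hn0 : (0:ℝ) < n := by positivity
  have hNδ : 1 / (n:ℝ) < δ := by exact_mod_cast hN
  -- grid points
  have hmem : ∀ (s : unitInterval) (k : ℕ),
      min s.1 (min ((k:ℝ)/n) 1) ∈ Set.Icc (0:ℝ) 1 :=
    fun s k => ⟨le_min s.2.1 (le_min (by positivity) zero_le_one),
      min_le_of_left_le s.2.2⟩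
  set pt : unitInterval → ℕ → unitInterval :=
    fun s k => ⟨min s.1 (min ((k:ℝ)/n) 1), hmem s k⟩ with hptdef
  have hptc : ∀ k, Continuous fun s => pt s k := fun k =>
    (continuous_subtype_val.min continuous_const).subtype_mk _
  have hptn : ∀ s, pt s n = s := fun s => by
    apply Subtype.ext
    simp only [hptdef]
    rw [div_self hn0.ne', min_self, min_eq_left s.2.2]
  have hpt0 : ∀ s, pt s 0 = 0 := fun s => by
    apply Subtype.ext
    simp only [hptdef]
    norm_num [min_eq_right s.2.1]
  have hptd : ∀ (s : unitInterval) (k : ℕ), dist (pt s (k+1)) (pt s k) < δ := by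
    intro s k
    rw [Subtype.dist_eq]
    simp only [hptdef]
    rw [Real.dist_eq]
    simp only [Nat.cast_add, Nat.cast_one]
    calc |min s.1 (min (((k:ℝ)+1)/n) 1) - min s.1 (min ((k:ℝ)/n) 1)|
        ≤ max |s.1 - s.1| |min (((k:ℝ)+1)/n) 1 - min ((k:ℝ)/n) 1| :=
          abs_min_sub_min_le_max _ _ _ _
      _ ≤ |(((k:ℝ)+1)/n) - ((k:ℝ)/n)| := by
          apply max_le
          · simp [abs_nonneg]
          · calc |min (((k:ℝ)+1)/n) 1 - min ((k:ℝ)/n) 1|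
                ≤ max |(((k:ℝ)+1)/n) - ((k:ℝ)/n)| |(1:ℝ) - 1| :=
                  abs_min_sub_min_le_max _ _ _ _
              _ ≤ _ := by simp
      _ < δ := by
          have h : (((k:ℝ)+1)/n) - ((k:ℝ)/n) = 1/n := by field_simp; ring
          rw [h, abs_of_pos (by positivity)]
          exact hNδ
  have hclose : ∀ (s : unitInterval) (k : ℕ),
      ‖γ (pt s (k+1)) - γ (pt s k)‖ < 1 := fun s k => by
    have := hδ (hptd s k)
    rwa [dist_eq_norm] at this
  set q : ℕ → unitInterval → ℂ := fun k s => γ (pt s (k+1)) / γ (pt s k) with hqdef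
  have hq1 : ∀ k s, ‖q k s‖ = 1 := fun k s => by
    simp [hqdef, norm_div, hγ]
  have hqre : ∀ k s, 0 < (q k s).re := by
    intro k s
    have h1 : ‖q k s - 1‖ < 1 := by
      rw [hqdef]
      simp only
      rw [div_sub_one (hne _), norm_div, hγ, div_one]
      exact hclose s k
    have h2 : |(q k s - 1).re| ≤ ‖q k s - 1‖ := by
      exact Complex.abs_re_le_norm _
    have h3 : (q k s - 1).re = (q k s).re - 1 := by simp
    rw [h3] at h2
    have := abs_lt.mp (h2.trans_lt h1)
    linarith [this.1]
  have hqc : ∀ k, Continuous (q k) := fun k =>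
    (γ.continuous.comp (hptc (k+1))).div (γ.continuous.comp (hptc k))
      (fun s => hne _)
  have hargc : ∀ k, Continuous fun s => Complex.arg (q k s) := by
    intro k
    rw [continuous_iff_continuousAt]
    intro s
    exact (Complex.continuousAt_arg (Complex.mem_slitPlane_iff.mpr
      (Or.inl (hqre k s)))).comp (hqc k).continuousAt
  -- the lift
  refine ⟨⟨fun s => Complex.arg (γ 0) + ∑ k ∈ Finset.range n, Complex.arg (q k s),
    continuous_const.add (continuous_finset_sum _ fun k _ => hargc k)⟩, ?_⟩
  intro s
  have hunit : ∀ z : ℂ, ‖z‖ = 1 → Complex.exp ((Complex.arg z : ℂ) * Complex.I) = z := by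
    intro z hz
    have := Complex.norm_mul_exp_arg_mul_I z
    rw [hz] at this
    simpa using this
  simp only [ContinuousMap.coe_mk]
  push_cast
  rw [add_mul, Complex.exp_add, Finset.sum_mul, Complex.exp_sum]
  have htele : ∀ M : ℕ, ∏ k ∈ Finset.range M, q k s = γ (pt s M) / γ (pt s 0) := by
    intro M
    induction M with
    | zero => simp [div_self (hne _)]
    | succ M ih =>
        rw [Finset.prod_range_succ, ih, hqdef]
        simp only
        rw [div_mul_div_comm, mul_comm (γ (pt s 0)) (γ (pt s M)),
          mul_div_mul_left _ _ (hne _)]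
  calc Complex.exp ((Complex.arg (γ 0) : ℂ) * Complex.I) *
        ∏ k ∈ Finset.range n, Complex.exp ((Complex.arg (q k s) : ℂ) * Complex.I)
      = γ 0 * ∏ k ∈ Finset.range n, q k s := by
        rw [hunit _ (hγ 0)]
        congr 1
        exact Finset.prod_congr rfl fun k _ => hunit _ (hq1 k s)
    _ = γ 0 * (γ s / γ 0) := by rw [htele n, hptn, hpt0]
    _ = γ s := by rw [mul_comm, div_mul_cancel₀ _ (hne 0)]

/-- A path in the unit circle whose endpoints are complex conjugate is homotopic,
through paths with conjugate endpoints, to a constant path at `1` or at `−1`. -/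
theorem stmt_6 (γ : C(unitInterval, ℂ)) (hγ : ∀ t, ‖γ t‖ = 1)
    (hends : γ 1 = starRingEnd ℂ (γ 0)) :
    ∃ H : C(unitInterval × unitInterval, ℂ),
      (∀ t s, ‖H (t, s)‖ = 1) ∧
      (∀ t, H (t, 1) = starRingEnd ℂ (H (t, 0))) ∧
      (∀ s, H (0, s) = γ s) ∧
      (∃ c : ℂ, (c = 1 ∨ c = -1) ∧ ∀ s, H (1, s) = c) := by
  obtain ⟨x, hx⟩ := aux_exists_lift γ hγ
  have hconj : ∀ r : ℝ, (starRingEnd ℂ) (Complex.exp ((r:ℂ) * Complex.I))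
      = Complex.exp (-((r:ℂ) * Complex.I)) := by
    intro r
    rw [← Complex.exp_conj]
    congr 1
    simp [Complex.conj_I]
  have h1 : Complex.exp (((x 1 + x 0 : ℝ) : ℂ) * Complex.I) = 1 := by
    have he := hends
    rw [← hx 1, ← hx 0, hconj] at he
    push_cast
    rw [add_mul, Complex.exp_add, he, ← Complex.exp_add]
    simp
  obtain ⟨k, hk⟩ := Complex.exp_eq_one_iff.mp h1
  have hk' : x 1 + x 0 = (k : ℝ) * (2 * Real.pi) := by
    rw [show (k:ℂ) * (2 * Real.pi * Complex.I) = ((k:ℂ) * (2 * Real.pi)) * Complex.I by ring]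
      at hk
    have h2 := mul_right_cancel₀ Complex.I_ne_zero hk
    exact_mod_cast h2
  set m : ℝ := (k : ℝ) * Real.pi with hm
  have h2m : x 1 + x 0 = 2 * m := by rw [hk', hm]; ring
  refine ⟨⟨fun p => Complex.exp ((((1 - (p.1 : ℝ)) * x p.2 + (p.1 : ℝ) * m : ℝ) : ℂ)
      * Complex.I), ?_⟩, ?_, ?_, ?_, ?_⟩
  · apply Complex.continuous_exp.comp
    apply Continuous.mul _ continuous_const
    apply Complex.continuous_ofReal.comp
    exact ((continuous_const.sub (continuous_subtype_val.comp continuous_fst)).mul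
      (x.continuous.comp continuous_snd)).add
      ((continuous_subtype_val.comp continuous_fst).mul continuous_const)
  · intro t s
    exact Complex.norm_exp_ofReal_mul_I _
  · intro t
    simp only [ContinuousMap.coe_mk]
    rw [hconj]
    set u0 : ℝ := (1 - (t:ℝ)) * x 0 + (t:ℝ) * m with hu0
    set u1 : ℝ := (1 - (t:ℝ)) * x 1 + (t:ℝ) * m with hu1
    have hsum : u1 + u0 = x 1 + x 0 := by
      rw [hu0, hu1]
      linear_combination (-(t:ℝ)) * h2m
    calc Complex.exp ((u1 : ℂ) * Complex.I)
        = Complex.exp (((u1 + u0 : ℝ) : ℂ) * Complex.I) *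
            Complex.exp (-((u0 : ℂ) * Complex.I)) := by
          rw [← Complex.exp_add]
          congr 1
          push_cast
          ring
      _ = Complex.exp (-((u0 : ℂ) * Complex.I)) := by
          rw [hsum, h1, one_mul]
  · intro s
    simp only [ContinuousMap.coe_mk]
    rw [← hx s]
    norm_num
  · refine ⟨Complex.exp ((m : ℂ) * Complex.I), ?_, ?_⟩
    · have hmIC : (m : ℂ) * Complex.I = (k : ℂ) * (Real.pi * Complex.I) := by
        rw [hm]; push_cast; ring
      rcases Int.even_or_odd k with ⟨j, hj⟩ | ⟨j, hj⟩
      · left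
        rw [hmIC, hj]
        push_cast
        rw [show ((j : ℂ) + j) * (Real.pi * Complex.I) = (j : ℂ) * (2 * Real.pi * Complex.I)
          by ring]
        exact Complex.exp_int_mul_two_pi_mul_I j
      · right
        rw [hmIC, hj]
        push_cast
        rw [show (2 * (j : ℂ) + 1) * (Real.pi * Complex.I)
            = (j : ℂ) * (2 * Real.pi * Complex.I) + Real.pi * Complex.I by ring,
          Complex.exp_add, Complex.exp_int_mul_two_pi_mul_I, one_mul,
          Complex.exp_pi_mul_I]
    · intro s
      simp only [ContinuousMap.coe_mk]
      norm_num
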